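/- Disjoint domains force disjoint time ranges: let S be a rectangular domain and ℓ, ℓ' ∈ C(S). If D(ℓ) ∩ D(ℓ') = ∅ then I(ℓ) ∩ I(ℓ') = ∅. -/
import Mathlib


/-! Common definitions for the broken line process on the even sublattice
`Z̃² = {(t,x) ∈ ℤ² : t + x even}`. A point is a pair `(t, x)`. -/

/-- A point `(t, x)` of `ℤ²`. -/
abbrev BLPt := ℤ × ℤ

/-- An edge between diagonal nearest neighbors, encoded by its endpoint of smaller
`x`-coordinate together with a direction: `(y, true)` is the edge from `y = (t,x)` to
`(t+1, x+1)`, and `(y, false)` is the edge from `y` to `(t−1, x+1)`. -/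
abbrev BLEdge := BLPt × Bool

namespace BL

/-- The endpoint of an edge with smaller `x`-coordinate. -/
def fstPt (e : BLEdge) : BLPt := e.1

/-- The endpoint of an edge with larger `x`-coordinate. -/
def sndPt (e : BLEdge) : BLPt := (e.1.1 + (if e.2 then 1 else -1), e.1.2 + 1)

/-- The edge `e_y^NE` from `y = (t,x)` to `(t+1, x+1)`. -/
def eNE (y : BLPt) : BLEdge := (y, true)

/-- The edge `e_y^NW` from `y = (t,x)` to `(t−1, x+1)`. -/
def eNW (y : BLPt) : BLEdge := (y, false)

/-- The edge `e_y^SE` from `y = (t,x)` to `(t+1, x−1)`. -/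
def eSE (y : BLPt) : BLEdge := ((y.1 + 1, y.2 - 1), false)

/-- The edge `e_y^SW` from `y = (t,x)` to `(t−1, x−1)`. -/
def eSW (y : BLPt) : BLEdge := ((y.1 - 1, y.2 - 1), true)

/-- A rectangular domain: a nonempty set of the form
`{(t,x) ∈ Z̃² : a ≤ x + t ≤ b, c ≤ x − t ≤ d}`. -/
def IsRectDomain (S : Set BLPt) : Prop :=
  S.Nonempty ∧ ∃ a b c d : ℤ,
    S = {y | (y.1 + y.2) % 2 = 0 ∧
      a ≤ y.2 + y.1 ∧ y.2 + y.1 ≤ b ∧ c ≤ y.2 - y.1 ∧ y.2 - y.1 ≤ d}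

/-- `S̄`: the union of `S` with all points at Euclidean distance `√2` from a point
of `S` (i.e. diagonal nearest neighbors of points of `S`). -/
def bar (S : Set BLPt) : Set BLPt :=
  S ∪ {y | ∃ y' ∈ S, (y.1 - y'.1) ^ 2 = 1 ∧ (y.2 - y'.2) ^ 2 = 1}

/-- `∂S̄ = S̄ \ S`. -/
def bdry (S : Set BLPt) : Set BLPt := bar S \ S

/-- `ℰ(S̄)`: the edges with at least one endpoint in `S`. -/
def edgeSet (S : Set BLPt) : Set BLEdge := {e | fstPt e ∈ S ∨ sndPt e ∈ S}

/-- A flow field on `ℰ(S̄)`: nonnegative on `ℰ(S̄)` and conservative at every `y ∈ S`: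
`η(e_y^SW) + η(e_y^SE) = η(e_y^NW) + η(e_y^NE)`. -/
def IsFlowField (S : Set BLPt) (η : BLEdge → ℝ) : Prop :=
  (∀ e ∈ edgeSet S, 0 ≤ η e) ∧
  ∀ y ∈ S, η (eSW y) + η (eSE y) = η (eNW y) + η (eNE y)

/-- A broken trace `(y₀, e₁, y₁, …, e_n, y_n)`, `n ≥ 1`, encoded by its list of points:
all points lie in `Z̃²`, and consecutive points satisfy `x_{i} = x_{i−1} + 1`,
`t_i = t_{i−1} ± 1` (the edges are then determined). -/
def IsBrokenTrace (l : List BLPt) : Prop :=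
  2 ≤ l.length ∧ (∀ y ∈ l, (y.1 + y.2) % 2 = 0) ∧
  ∀ i : ℕ, ∀ h : i + 1 < l.length,
    (l[i + 1]'h).2 = (l[i]'(Nat.lt_of_succ_lt h)).2 + 1 ∧
    ((l[i + 1]'h).1 = (l[i]'(Nat.lt_of_succ_lt h)).1 + 1 ∨
      (l[i + 1]'h).1 = (l[i]'(Nat.lt_of_succ_lt h)).1 - 1)

/-- The list of edges `e₁, …, e_n` of a broken trace. -/
def traceEdges (l : List BLPt) : List BLEdge :=
  List.zipWith (fun y y' => ((y, y'.1 == y.1 + 1) : BLEdge)) l l.tail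

/-- `ℓ ⊆ S̄`: a broken trace all of whose edges lie in `ℰ(S̄)`. -/
def InBar (S : Set BLPt) (l : List BLPt) : Prop :=
  IsBrokenTrace l ∧ ∀ e ∈ traceEdges l, e ∈ edgeSet S

/-- `ℓ` crosses `S`: `ℓ ⊆ S̄` and its two extremal points lie in `∂S̄`.
`C(S)` is the set of broken traces crossing `S`. -/
def Crosses (S : Set BLPt) (l : List BLPt) : Prop :=
  InBar S l ∧ (∃ y ∈ bdry S, l.head? = some y) ∧ (∃ y ∈ bdry S, l.getLast? = some y)

/-- `ℓ ⪰ ℓ'` (`ℓ` is to the right of `ℓ'`): `t(x) ≥ t'(x)` for every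
`x ∈ D(ℓ) ∩ D(ℓ')`, and `t(x) ≥ t'(x')` for some `x ∈ D(ℓ)`, `x' ∈ D(ℓ')`. -/
def RightOf (l l' : List BLPt) : Prop :=
  (∀ y ∈ l, ∀ y' ∈ l', y.2 = y'.2 → y'.1 ≤ y.1) ∧
  ∃ y ∈ l, ∃ y' ∈ l', y'.1 ≤ y.1

/-- The birth `ξ_y = min(η(e_y^NE), η(e_y^SE))` of a flow field at `y`. -/
noncomputable def xi (η : BLEdge → ℝ) (y : BLPt) : ℝ := min (η (eNE y)) (η (eSE y))

/-- Association of atoms `(e₁,p₁) ∼ (e₂,p₂)` at a vertex `y ∈ S` (Cases 1–4). -/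
def Assoc (S : Set BLPt) (η : BLEdge → ℝ) (e₁ : BLEdge) (p₁ : ℝ) (e₂ : BLEdge) (p₂ : ℝ) :
    Prop :=
  ∃ y ∈ S,
    (e₁ = eSW y ∧ e₂ = eNW y ∧ 0 < p₁ ∧ p₁ ≤ min (η e₁) (η e₂) ∧ p₂ = p₁) ∨
    (e₁ = eSE y ∧ e₂ = eNW y ∧ η (eSW y) < p₂ ∧ p₂ ≤ η e₂ ∧ p₁ = p₂ - η (eSW y)) ∨
    (e₁ = eSW y ∧ e₂ = eNE y ∧ η (eNW y) < p₁ ∧ p₁ ≤ η e₁ ∧ p₂ = p₁ - η (eNW y)) ∨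
    (e₁ = eSE y ∧ e₂ = eNE y ∧ η e₁ - xi η y < p₁ ∧ p₁ ≤ η e₁ ∧
      η e₂ - xi η y < p₂ ∧ p₂ ≤ η e₂ ∧ η e₁ - p₁ = η e₂ - p₂)

/-- A chain of associated atoms along a list of edges: `ps i` is an atom of the `i`-th
edge and consecutive atoms are associated. -/
def IsChain (S : Set BLPt) (η : BLEdge → ℝ) (es : List BLEdge) (ps : ℕ → ℝ) : Prop :=
  (∀ i : ℕ, ∀ h : i < es.length, 0 < ps i ∧ ps i ≤ η (es[i]'h)) ∧
  ∀ i : ℕ, ∀ h : i + 1 < es.length,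
    Assoc S η (es[i]'(Nat.lt_of_succ_lt h)) (ps i) (es[i + 1]'h) (ps (i + 1))

/-- The set of atoms of the `i`-th edge of `ℓ` that participate in some chain of
associated atoms along `ℓ`. -/
def chainPosSet (S : Set BLPt) (η : BLEdge → ℝ) (l : List BLPt) (i : ℕ) : Set ℝ :=
  {p | ∃ ps : ℕ → ℝ, IsChain S η (traceEdges l) ps ∧ ps i = p}

/-- The weight `w_η(ℓ)` of a broken trace: the common length of the maximal intervals
of atoms participating in chains along `ℓ` (and `0` if there is no such chain). -/
noncomputable def weight (S : Set BLPt) (η : BLEdge → ℝ) (l : List BLPt) : ℝ := by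
  classical
  exact if (chainPosSet S η l 0).Nonempty then
      sSup (chainPosSet S η l 0) - sInf (chainPosSet S η l 0)
    else 0

end BL

open BL

namespace BLDisjointAux

lemma step {l : List BLPt} (h : IsBrokenTrace l) {i : ℕ} (hi : i + 1 < l.length) :
    l[i+1]!.2 = l[i]!.2 + 1 ∧ (l[i+1]!.1 = l[i]!.1 + 1 ∨ l[i+1]!.1 = l[i]!.1 - 1) := by
  rw [getElem!_pos l (i+1) hi, getElem!_pos l i (Nat.lt_of_succ_lt hi)]
  exact h.2.2 i hi

lemma mono {l : List BLPt} (h : IsBrokenTrace l) :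
    ∀ i j : ℕ, i ≤ j → j < l.length →
      l[i]!.1 + l[i]!.2 ≤ l[j]!.1 + l[j]!.2 ∧
      l[i]!.2 - l[i]!.1 ≤ l[j]!.2 - l[j]!.1 ∧
      l[j]!.2 = l[i]!.2 + (j : ℤ) - (i : ℤ) := by
  intro i j hij
  induction j, hij using Nat.le_induction with
  | base => intro _; omega
  | succ j hij ih =>
    intro hj
    have h1 := ih (Nat.lt_of_succ_lt hj)
    have h2 := step h hj
    omega

lemma edge_or {S : Set BLPt} {l : List BLPt} (h : InBar S l) {i : ℕ}
    (hi : i + 1 < l.length) : l[i]! ∈ S ∨ l[i+1]! ∈ S := by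
  have h0 : i < l.length := Nat.lt_of_succ_lt hi
  have h1 : i < l.tail.length := by simp [List.length_tail]; omega
  have hlen : i < (traceEdges l).length := by
    simpa [traceEdges, List.length_zipWith] using lt_min h0 h1
  have he : (traceEdges l)[i]'hlen =
      ((l[i]'h0, (l[i+1]'hi).1 == (l[i]'h0).1 + 1) : BLEdge) := by
    simp [traceEdges, List.getElem_zipWith, List.getElem_tail]
  have hmem := h.2 _ (List.getElem_mem hlen)
  rw [he] at hmem
  obtain ⟨hx, ht⟩ := h.1.2.2 i hi
  rw [getElem!_pos l (i+1) hi, getElem!_pos l i h0]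
  rcases hmem with hf | hs
  · exact Or.inl hf
  · right
    rcases ht with h' | h'
    · have hb : ((l[i+1]'hi).1 == (l[i]'h0).1 + 1) = true := by simp [h']
      rw [hb] at hs
      simp only [sndPt, if_true] at hs
      have he2 : l[i+1]'hi = ((l[i]'h0).1 + 1, (l[i]'h0).2 + 1) := by
        ext <;> omega
      rw [he2]; exact hs

    · have hb : ((l[i+1]'hi).1 == (l[i]'h0).1 + 1) = false := by
        simp only [beq_eq_false_iff_ne, ne_eq]; omega
      rw [hb] at hs
      simp only [sndPt, Bool.false_eq_true, if_false] at hs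
      have he2 : l[i+1]'hi = ((l[i]'h0).1 + -1, (l[i]'h0).2 + 1) := by
        ext <;> omega
      rw [he2]; exact hs

lemma end_notin {S : Set BLPt} {l : List BLPt} (hl : Crosses S l) :
    l[0]! ∉ S ∧ l[l.length - 1]! ∉ S ∧ 3 ≤ l.length := by
  have hlen2 : 2 ≤ l.length := hl.1.1.1
  obtain ⟨y, hy, hhead⟩ := hl.2.1
  obtain ⟨z, hz, hlast⟩ := hl.2.2
  have h0 : l[0]! ∉ S := by
    have : l.head? = some l[0]! := by
      rw [List.head?_eq_getElem?, getElem!_pos l 0 (by omega)]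
      exact getElem?_pos l 0 (by omega)
    rw [this] at hhead
    have : y = l[0]! := by injection hhead.symm
    exact this ▸ hy.2
  have hN : l[l.length - 1]! ∉ S := by
    have : l.getLast? = some l[l.length - 1]! := by
      rw [List.getLast?_eq_getElem?, getElem!_pos l (l.length - 1) (by omega)]
      exact getElem?_pos l (l.length - 1) (by omega)
    rw [this] at hlast
    have : z = l[l.length - 1]! := by injection hlast.symm
    exact this ▸ hz.2
  refine ⟨h0, hN, ?_⟩
  by_contra hlen
  have he : l.length = 2 := by omega
  rcases edge_or hl.1 (i := 0) (by omega) with h | h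
  · exact h0 h
  · rw [show (0 + 1 : ℕ) = l.length - 1 by omega] at h
    exact hN h

lemma spread_lower {S : Set BLPt} {l : List BLPt} (hl : Crosses S l) (B : ℤ)
    (hS : ∀ i : ℕ, i ≤ l.length - 2 → l[i]! ∈ S → B ≤ 2 * l[i]!.1) :
    ∀ i : ℕ, i < l.length → B - 2 ≤ 2 * l[i]!.1 := by
  obtain ⟨h0, hN, hlen⟩ := end_notin hl
  intro i hi
  by_cases hiS : l[i]! ∈ S
  · have hne : i ≠ l.length - 1 := by rintro rfl; exact hN hiS
    have := hS i (by omega) hiS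
    omega
  · rcases Nat.eq_zero_or_pos i with rfl | hipos
    · have h1S : l[1]! ∈ S := by
        rcases edge_or hl.1 (i := 0) (by omega) with h | h
        · exact absurd h hiS
        · exact h
      have hb := hS 1 (by omega) h1S
      have hst := step hl.1.1 (i := 0) (by omega)
      simp only [Nat.reduceAdd] at hst
      omega
    · have hj : i - 1 + 1 < l.length := by omega
      have hjS : l[i-1]! ∈ S := by
        rcases edge_or hl.1 hj with h | h
        · exact h
        · rw [show i - 1 + 1 = i by omega] at h
          exact absurd h hiS
      have hjne : i - 1 ≠ l.length - 1 := by
        rintro h; rw [h] at hjS; exact hN hjS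
      have hb := hS (i-1) (by omega) hjS
      have hst := step hl.1.1 hj
      rw [show i - 1 + 1 = i by omega] at hst
      omega

lemma spread_upper {S : Set BLPt} {l : List BLPt} (hl : Crosses S l) (B : ℤ)
    (hS : ∀ i : ℕ, i ≤ l.length - 2 → l[i]! ∈ S → 2 * l[i]!.1 ≤ B) :
    ∀ i : ℕ, i < l.length → 2 * l[i]!.1 ≤ B + 2 := by
  obtain ⟨h0, hN, hlen⟩ := end_notin hl
  intro i hi
  by_cases hiS : l[i]! ∈ S
  · have hne : i ≠ l.length - 1 := by rintro rfl; exact hN hiS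
    have := hS i (by omega) hiS
    omega
  · rcases Nat.eq_zero_or_pos i with rfl | hipos
    · have h1S : l[1]! ∈ S := by
        rcases edge_or hl.1 (i := 0) (by omega) with h | h
        · exact absurd h hiS
        · exact h
      have hb := hS 1 (by omega) h1S
      have hst := step hl.1.1 (i := 0) (by omega)
      simp only [Nat.reduceAdd] at hst
      omega
    · have hj : i - 1 + 1 < l.length := by omega
      have hjS : l[i-1]! ∈ S := by
        rcases edge_or hl.1 hj with h | h
        · exact h
        · rw [show i - 1 + 1 = i by omega] at h
          exact absurd h hiS
      have hjne : i - 1 ≠ l.length - 1 := by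
        rintro h; rw [h] at hjS; exact hN hjS
      have hb := hS (i-1) (by omega) hjS
      have hst := step hl.1.1 hj
      rw [show i - 1 + 1 = i by omega] at hst
      omega

lemma key (S : Set BLPt) (a b c d : ℤ)
    (hSeq : S = {y : BLPt | (y.1 + y.2) % 2 = 0 ∧
      a ≤ y.2 + y.1 ∧ y.2 + y.1 ≤ b ∧ c ≤ y.2 - y.1 ∧ y.2 - y.1 ≤ d})
    (l l' : List BLPt) (hl : Crosses S l) (hl' : Crosses S l')
    (hlt : l[l.length - 1]!.2 < l'[0]!.2) :
    ∀ y ∈ l, ∀ y' ∈ l', y.1 ≠ y'.1 := by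
  obtain ⟨h0, hlastS, hN⟩ := end_notin hl
  obtain ⟨h0', hlastS', hN'⟩ := end_notin hl'
  have memS : ∀ y : BLPt, y ∈ S ↔ ((y.1 + y.2) % 2 = 0 ∧
      a ≤ y.2 + y.1 ∧ y.2 + y.1 ≤ b ∧ c ≤ y.2 - y.1 ∧ y.2 - y.1 ≤ d) :=
    fun y => by rw [hSeq]; exact Iff.rfl
  have hq : l'[1]! ∈ S := by
    rcases edge_or hl'.1 (i := 0) (by omega) with h | h
    · exact absurd h h0'
    · simpa using h
  have hp : l[l.length-2]! ∈ S := by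
    have h2 : l.length - 2 + 1 < l.length := by omega
    rcases edge_or hl.1 h2 with h | h
    · exact h
    · rw [show l.length - 2 + 1 = l.length - 1 by omega] at h
      exact absurd h hlastS
  have hstepL := step hl.1.1 (i := l.length - 2) (by omega)
  rw [show l.length - 2 + 1 = l.length - 1 by omega] at hstepL
  have hstepR := step hl'.1.1 (i := 0) (by omega)
  simp only [Nat.reduceAdd] at hstepR
  have hparL : (l[l.length-1]!.1 + l[l.length-1]!.2) % 2 = 0 := by
    rw [getElem!_pos l _ (by omega)]
    exact hl.1.1.2.1 _ (List.getElem_mem (by omega))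
  have hparR : (l'[0]!.1 + l'[0]!.2) % 2 = 0 := by
    rw [getElem!_pos l' _ (by omega)]
    exact hl'.1.1.2.1 _ (List.getElem_mem (by omega))
  rw [memS] at hp hq
  have hpnot : ¬ ((l[l.length-1]!.1 + l[l.length-1]!.2) % 2 = 0 ∧
      a ≤ l[l.length-1]!.2 + l[l.length-1]!.1 ∧ l[l.length-1]!.2 + l[l.length-1]!.1 ≤ b ∧
      c ≤ l[l.length-1]!.2 - l[l.length-1]!.1 ∧ l[l.length-1]!.2 - l[l.length-1]!.1 ≤ d) := by
    rw [← memS]; exact hlastS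
  have hq0not : ¬ ((l'[0]!.1 + l'[0]!.2) % 2 = 0 ∧
      a ≤ l'[0]!.2 + l'[0]!.1 ∧ l'[0]!.2 + l'[0]!.1 ≤ b ∧
      c ≤ l'[0]!.2 - l'[0]!.1 ∧ l'[0]!.2 - l'[0]!.1 ≤ d) := by
    rw [← memS]; exact h0'
  have hexit : b ≤ l[l.length-2]!.2 + l[l.length-2]!.1 + 1 ∨
      d ≤ l[l.length-2]!.2 - l[l.length-2]!.1 + 1 := by omega
  have hentry : l'[1]!.2 + l'[1]!.1 ≤ a + 1 ∨ l'[1]!.2 - l'[1]!.1 ≤ c + 1 := by omega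
  rcases hexit with hA | hB
  · -- Case A: l exits through the `u = b` side
    have huq : l'[1]!.2 + l'[1]!.1 ≤ a + 1 := by omega
    have hSL : ∀ i : ℕ, i ≤ l.length - 2 → l[i]! ∈ S →
        (l'[1]!.2 + l'[1]!.1) - (l[l.length-2]!.2 - l[l.length-2]!.1) ≤ 2 * l[i]!.1 := by
      intro i hi hiS
      rw [memS] at hiS
      have hm := mono hl.1.1 i (l.length - 2) hi (by omega)
      omega
    have hSR : ∀ j : ℕ, j ≤ l'.length - 2 → l'[j]! ∈ S →
        2 * l'[j]!.1 ≤ (l'[1]!.2 + l'[1]!.1) - (l[l.length-2]!.2 - l[l.length-2]!.1) - 6 := by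
      intro j hj hjS
      rcases Nat.eq_zero_or_pos j with rfl | hjpos
      · exact absurd hjS h0'
      · rw [memS] at hjS
        have hm := mono hl'.1.1 1 j hjpos (by omega)
        omega
    have hAL := spread_lower hl _ hSL
    have hAR := spread_upper hl' _ hSR
    intro y hy y' hy'
    obtain ⟨i, hi, rfl⟩ := List.mem_iff_getElem.mp hy
    obtain ⟨j, hj, rfl⟩ := List.mem_iff_getElem.mp hy'
    have h1 := hAL i hi
    have h2 := hAR j hj
    rw [getElem!_pos l i hi] at h1
    rw [getElem!_pos l' j hj] at h2
    omega
  · -- Case B: l exits through the `v = d` side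
    have hvq : l'[1]!.2 - l'[1]!.1 ≤ c + 1 := by omega
    have hSL : ∀ i : ℕ, i ≤ l.length - 2 → l[i]! ∈ S →
        2 * l[i]!.1 ≤ (l[l.length-2]!.2 + l[l.length-2]!.1) - (l'[1]!.2 - l'[1]!.1) := by
      intro i hi hiS
      rw [memS] at hiS
      have hm := mono hl.1.1 i (l.length - 2) hi (by omega)
      omega
    have hSR : ∀ j : ℕ, j ≤ l'.length - 2 → l'[j]! ∈ S →
        (l[l.length-2]!.2 + l[l.length-2]!.1) - (l'[1]!.2 - l'[1]!.1) + 6 ≤ 2 * l'[j]!.1 := by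
      intro j hj hjS
      rcases Nat.eq_zero_or_pos j with rfl | hjpos
      · exact absurd hjS h0'
      · rw [memS] at hjS
        have hm := mono hl'.1.1 1 j hjpos (by omega)
        omega
    have hAL := spread_upper hl _ hSL
    have hAR := spread_lower hl' _ hSR
    intro y hy y' hy'
    obtain ⟨i, hi, rfl⟩ := List.mem_iff_getElem.mp hy
    obtain ⟨j, hj, rfl⟩ := List.mem_iff_getElem.mp hy'
    have h1 := hAL i hi
    have h2 := hAR j hj
    rw [getElem!_pos l i hi] at h1
    rw [getElem!_pos l' j hj] at h2
    omega

end BLDisjointAux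


open BL in
/-- **Disjoint domains force disjoint time ranges:** if `ℓ, ℓ' ∈ C(S)` and
`D(ℓ) ∩ D(ℓ') = ∅`, then `I(ℓ) ∩ I(ℓ') = ∅`. -/
theorem disjoint_domains_disjoint_times (S : Set BLPt) (hS : IsRectDomain S)
    (l l' : List BLPt) (hl : Crosses S l) (hl' : Crosses S l')
    (hD : ∀ y ∈ l, ∀ y' ∈ l', y.2 ≠ y'.2) :
    ∀ y ∈ l, ∀ y' ∈ l', y.1 ≠ y'.1 := by
  obtain ⟨-, a, b, c, d, hSeq⟩ := hS
  obtain ⟨-, -, hN⟩ := BLDisjointAux.end_notin hl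
  obtain ⟨-, -, hN'⟩ := BLDisjointAux.end_notin hl'
  have hmem : ∀ (m : List BLPt) (i : ℕ), i < m.length → m[i]! ∈ m := by
    intro m i hi
    rw [getElem!_pos m i hi]
    exact List.getElem_mem hi
  have h00 : l[0]!.2 ≠ l'[0]!.2 :=
    hD _ (hmem l 0 (by omega)) _ (hmem l' 0 (by omega))
  rcases lt_or_gt_of_ne h00 with hlt | hgt
  · -- l strictly to the left of l'
    have hsep : l[l.length - 1]!.2 < l'[0]!.2 := by
      by_contra hcon
      push_neg at hcon
      have hx0 := (BLDisjointAux.mono hl.1.1 0 (l.length - 1) (by omega) (by omega)).2.2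
      set k : ℕ := (l'[0]!.2 - l[0]!.2).toNat with hk
      have hk1 : 1 ≤ k := by omega
      have hkN : k < l.length := by omega
      have hxk := (BLDisjointAux.mono hl.1.1 0 k (by omega) hkN).2.2
      have : l[k]!.2 = l'[0]!.2 := by omega
      exact hD _ (hmem l k hkN) _ (hmem l' 0 (by omega)) this
    exact BLDisjointAux.key S a b c d hSeq l l' hl hl' hsep
  · -- l' strictly to the left of l
    have hsep : l'[l'.length - 1]!.2 < l[0]!.2 := by
      by_contra hcon
      push_neg at hcon
      have hx0 := (BLDisjointAux.mono hl'.1.1 0 (l'.length - 1) (by omega) (by omega)).2.2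
      set k : ℕ := (l[0]!.2 - l'[0]!.2).toNat with hk
      have hk1 : 1 ≤ k := by omega
      have hkN : k < l'.length := by omega
      have hxk := (BLDisjointAux.mono hl'.1.1 0 k (by omega) hkN).2.2
      have : l'[k]!.2 = l[0]!.2 := by omega
      exact hD _ (hmem l 0 (by omega)) _ (hmem l' k hkN) this.symm
    have := BLDisjointAux.key S a b c d hSeq l' l hl' hl hsep
    intro y hy y' hy'
    exact (this y' hy' y hy).symm
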